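/- For r, s ≥ 1 and generic q, t, the residue at Q = q^r t^{-s} of Z_{∅,(r^s)}(Q,q,t), as a rational function of Q, equals G(r,s;q,t) := -q^r t^{-s} ∏_{-r ≤ i ≤ r-1, -s ≤ j ≤ s-1, (i,j)≠(0,0)} (1 - q^i t^{-j})^{-1}. -/

import Mathlib

open Finset Filter

/-- Length of column `j+1` of the Young diagram of `p` (rows 0-indexed). -/
noncomputable def conjP (p : ℕ → ℕ) (j : ℕ) : ℕ := Nat.card {i : ℕ | j < p i}

/-- The Nekrasov factor `N_{λ,μ}(Q)`; rows are 0-indexed, so `l i` is the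
`(i+1)`-st row of `λ`.  It equals
`∏_{(i,j)∈μ} (1 - Q q^{λ_i - j} t^{μ'_j - i + 1}) ·
 ∏_{(i,j)∈λ} (1 - Q q^{-μ_i + j - 1} t^{-λ'_j + i})` (1-indexed boxes). -/
noncomputable def Nfac (q t Q : ℂ) (l m : ℕ → ℕ) : ℂ :=
  (∏ᶠ i : ℕ, ∏ j ∈ Finset.range (m i),
    (1 - Q * q ^ ((l i : ℤ) - ((j : ℤ) + 1)) * t ^ ((conjP m j : ℤ) - (i : ℤ)))) *
  (∏ᶠ i : ℕ, ∏ j ∈ Finset.range (l i),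
    (1 - Q * q ^ (-(m i : ℤ) + (j : ℤ)) * t ^ (-(conjP l j : ℤ) + (i : ℤ) + 1)))

/-- The Nekrasov summand
`Z_{λ,μ}(Q,q,t) = 1/(N_{λ,λ}(1) N_{μ,μ}(1) N_{λ,μ}(Q) N_{μ,λ}(Q⁻¹))`. -/
noncomputable def Zlm (q t Q : ℂ) (l m : ℕ → ℕ) : ℂ :=
  1 / (Nfac q t 1 l l * Nfac q t 1 m m * Nfac q t Q l m * Nfac q t Q⁻¹ m l)

/-- `p : ℕ → ℕ` is a partition: antitone with finite support. -/
def IsPartition (p : ℕ → ℕ) : Prop :=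
  (∀ i j : ℕ, i ≤ j → p j ≤ p i) ∧ {i | p i ≠ 0}.Finite

/-- The rectangular partition `(r^s)`: `s` rows of length `r`. -/
def rect (r s : ℕ) : ℕ → ℕ := fun i => if i < s then r else 0

/-- The single-box partition `(1)`. -/
def oneBox : ℕ → ℕ := fun i => if i = 0 then 1 else 0

/-- The empty partition. -/
def emptyP : ℕ → ℕ := fun _ => 0

/-- `G(r,s;q,t) = -sgn(r) q^r t^{-s}
∏_{-|r| ≤ i ≤ |r|-1, -|s| ≤ j ≤ |s|-1, (i,j)≠(0,0)} (1 - q^i t^{-j})^{-1}`. -/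
noncomputable def Gfun (q t : ℂ) (r s : ℤ) : ℂ :=
  -(if 0 < r then (1 : ℂ) else -1) * q ^ r * t ^ (-s) *
    ∏ i ∈ Finset.Icc (-|r|) (|r| - 1), ∏ j ∈ Finset.Icc (-|s|) (|s| - 1),
      (if i = 0 ∧ j = 0 then 1 else (1 - q ^ i * t ^ (-j))⁻¹)

/-! ### Auxiliary lemmas -/

section Aux

lemma conjP_rect (r s j : ℕ) (hj : j < r) : conjP (rect r s) j = s := by
  unfold conjP
  have h : {i : ℕ | j < rect r s i} = Set.Iio s := by
    ext i; simp only [rect, Set.mem_setOf_eq, Set.mem_Iio]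
    split_ifs with h' <;> omega
  rw [h]
  simp [Nat.card_coe_set_eq]

lemma supp_lemma {f : ℕ → ℕ → ℂ} (r s : ℕ) :
    (Function.mulSupport fun i => ∏ j ∈ range (rect r s i), f i j) ⊆ ↑(range s) := by
  intro i hi
  simp only [Function.mem_mulSupport] at hi
  simp only [coe_range, Set.mem_Iio]
  by_contra h
  push_neg at h
  apply hi
  have : rect r s i = 0 := by simp [rect]; omega
  rw [this]; simp

lemma Nfac_empty_rect (q t Q : ℂ) (r s : ℕ) :
    Nfac q t Q emptyP (rect r s) =
      ∏ i ∈ range s, ∏ j ∈ range r, (1 - Q * q ^ (-((j:ℤ)+1)) * t ^ ((s:ℤ) - i)) := by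
  unfold Nfac
  have h2 : (∏ᶠ i : ℕ, ∏ j ∈ Finset.range (emptyP i),
      (1 - Q * q ^ (-(rect r s i : ℤ) + (j : ℤ)) * t ^ (-(conjP emptyP j : ℤ) + (i : ℤ) + 1))) = 1 := by
    simp [emptyP]
  rw [h2, mul_one]
  rw [finprod_eq_prod_of_mulSupport_subset _ (supp_lemma r s)]
  refine Finset.prod_congr rfl fun i hi => ?_
  simp only [mem_range] at hi
  have hri : rect r s i = r := by simp [rect, hi]
  rw [hri]
  refine Finset.prod_congr rfl fun j hj => ?_
  simp only [mem_range] at hj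
  rw [conjP_rect r s j hj]
  simp only [emptyP, Nat.cast_zero]
  ring_nf

lemma Nfac_rect_empty (q t Q : ℂ) (r s : ℕ) :
    Nfac q t Q (rect r s) emptyP =
      ∏ i ∈ range s, ∏ j ∈ range r, (1 - Q * q ^ (j:ℤ) * t ^ (-(s:ℤ) + i + 1)) := by
  unfold Nfac
  have h1 : (∏ᶠ i : ℕ, ∏ j ∈ Finset.range (emptyP i),
      (1 - Q * q ^ ((rect r s i : ℤ) - ((j : ℤ) + 1)) * t ^ ((conjP emptyP j : ℤ) - (i : ℤ)))) = 1 := by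
    simp [emptyP]
  rw [h1, one_mul]
  rw [finprod_eq_prod_of_mulSupport_subset _ (supp_lemma r s)]
  refine Finset.prod_congr rfl fun i hi => ?_
  simp only [mem_range] at hi
  have hri : rect r s i = r := by simp [rect, hi]
  rw [hri]
  refine Finset.prod_congr rfl fun j hj => ?_
  simp only [mem_range] at hj
  rw [conjP_rect r s j hj]
  simp only [emptyP, Nat.cast_zero]
  ring_nf

lemma Nfac_rect_rect (q t Q : ℂ) (r s : ℕ) :
    Nfac q t Q (rect r s) (rect r s) =
      (∏ i ∈ range s, ∏ j ∈ range r, (1 - Q * q ^ ((r:ℤ) - ((j:ℤ)+1)) * t ^ ((s:ℤ) - i))) *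
      (∏ i ∈ range s, ∏ j ∈ range r, (1 - Q * q ^ (-(r:ℤ) + j) * t ^ (-(s:ℤ) + i + 1))) := by
  unfold Nfac
  rw [finprod_eq_prod_of_mulSupport_subset _ (supp_lemma r s),
      finprod_eq_prod_of_mulSupport_subset _ (supp_lemma r s)]
  congr 1 <;>
  · refine Finset.prod_congr rfl fun i hi => ?_
    simp only [mem_range] at hi
    have hri : rect r s i = r := by simp [rect, hi]
    rw [hri]
    refine Finset.prod_congr rfl fun j hj => ?_
    simp only [mem_range] at hj
    rw [conjP_rect r s j hj]

lemma Nfac_empty_empty (q t Q : ℂ) : Nfac q t Q emptyP emptyP = 1 := by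
  unfold Nfac; simp [emptyP]

lemma Icc_eq_map (a : ℤ) (n : ℕ) :
    Finset.Icc a (a + n - 1) = (Finset.range n).map ⟨fun k : ℕ => a + k, fun x y h => by simpa using h⟩ := by
  ext j
  simp only [Finset.mem_Icc, Finset.mem_map, Finset.mem_range, Function.Embedding.coeFn_mk]
  constructor
  · intro ⟨h1, h2⟩; exact ⟨(j - a).toNat, by omega, by show a + (((j - a).toNat : ℕ) : ℤ) = j; omega⟩
  · rintro ⟨k, hk, rfl⟩; show a ≤ a + (k:ℤ) ∧ a + (k:ℤ) ≤ a + n - 1; omega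

lemma prod_Icc_int (g : ℤ → ℂ) (a : ℤ) (n : ℕ) :
    ∏ j ∈ Finset.Icc a (a + n - 1), g j = ∏ j ∈ Finset.range n, g (a + j) := by
  rw [Icc_eq_map, Finset.prod_map]
  rfl

lemma prod_reflect (g : ℤ → ℂ) (n : ℕ) :
    ∏ j ∈ range n, g ((n:ℤ) - 1 - j) = ∏ j ∈ range n, g (j:ℤ) := by
  rw [← Finset.prod_range_reflect]
  refine Finset.prod_congr rfl fun j hj => ?_
  simp only [Finset.mem_range] at hj
  congr 1
  omega

lemma prod_split_two (f : ℕ → ℕ → ℂ) {n m a b : ℕ} (ha : a < n) (hb : b < m) :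
    (∏ i ∈ range n, ∏ j ∈ range m, f i j) =
      f a b * ∏ i ∈ range n, ∏ j ∈ range m, (if i = a ∧ j = b then 1 else f i j) := by
  rw [← Finset.prod_product' (range n) (range m) f,
      ← Finset.prod_product' (range n) (range m) (fun i j => if i = a ∧ j = b then 1 else f i j)]
  have hab : ((a, b) : ℕ × ℕ) ∈ range n ×ˢ range m := by
    simp [Finset.mem_product, ha, hb]
  rw [Finset.prod_eq_mul_prod_sdiff_singleton_of_mem hab (fun p => f p.1 p.2),
      Finset.prod_eq_mul_prod_sdiff_singleton_of_mem hab
        (fun p : ℕ × ℕ => if p.1 = a ∧ p.2 = b then 1 else f p.1 p.2)]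
  simp only [and_self, if_pos, mul_one]
  rw [one_mul]
  congr 1
  refine Finset.prod_congr rfl fun p hp => ?_
  simp only [Finset.mem_sdiff, Finset.mem_singleton] at hp
  rw [if_neg]
  rintro ⟨h1, h2⟩
  exact hp.2 (Prod.ext h1 h2)

lemma quad_decomp (f : ℤ → ℤ → ℂ) (r s : ℕ) :
    (∏ i ∈ Icc (-(r:ℤ)) ((r:ℤ)-1), ∏ j ∈ Icc (-(s:ℤ)) ((s:ℤ)-1), f i j) =
    ((∏ k ∈ range r, ∏ l ∈ range s, f (-(r:ℤ)+k) (-(s:ℤ)+l)) *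
     (∏ k ∈ range r, ∏ l ∈ range s, f (-(r:ℤ)+k) (-(s:ℤ)+(s+l)))) *
    ((∏ k ∈ range r, ∏ l ∈ range s, f (-(r:ℤ)+(r+k)) (-(s:ℤ)+l)) *
     (∏ k ∈ range r, ∏ l ∈ range s, f (-(r:ℤ)+(r+k)) (-(s:ℤ)+(s+l)))) := by
  have hr' : ((r:ℤ) - 1) = -(r:ℤ) + ((r+r : ℕ):ℤ) - 1 := by push_cast; ring
  have hs' : ((s:ℤ) - 1) = -(s:ℤ) + ((s+s : ℕ):ℤ) - 1 := by push_cast; ring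
  rw [hr', prod_Icc_int (fun i => ∏ j ∈ Icc (-(s:ℤ)) ((s:ℤ)-1), f i j) (-(r:ℤ)) (r+r)]
  have hinner : ∀ a : ℤ, (∏ j ∈ Icc (-(s:ℤ)) ((s:ℤ)-1), f a j)
      = (∏ l ∈ range s, f a (-(s:ℤ)+l)) * (∏ l ∈ range s, f a (-(s:ℤ)+(s+l))) := by
    intro a
    rw [hs', prod_Icc_int (fun j => f a j) (-(s:ℤ)) (s+s), Finset.prod_range_add]
    push_cast
    ring_nf
  simp only [hinner]
  rw [Finset.prod_range_add, Finset.prod_mul_distrib, Finset.prod_mul_distrib]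
  push_cast
  ring_nf

lemma zmerge {q t : ℂ} (hq : q ≠ 0) (ht : t ≠ 0) (a b c d : ℤ) :
    (q ^ a * t ^ b) * q ^ c * t ^ d = q ^ (a + c) * t ^ (b + d) := by
  rw [zpow_add₀ hq, zpow_add₀ ht]; ring

lemma zmerge_inv {q t : ℂ} (hq : q ≠ 0) (ht : t ≠ 0) (a b c d : ℤ) :
    (q ^ a * t ^ b)⁻¹ * q ^ c * t ^ d = q ^ (c - a) * t ^ (d - b) := by
  rw [mul_inv, ← zpow_neg, ← zpow_neg, zpow_sub₀ hq, zpow_sub₀ ht, zpow_neg, zpow_neg]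
  field_simp

lemma match_C1 (q t : ℂ) (r s : ℕ) :
    (∏ i ∈ range s, ∏ j ∈ range r, (1 - q ^ ((r:ℤ) - ((j:ℤ)+1)) * t ^ ((s:ℤ) - i)))
    = ∏ k ∈ range r, ∏ l ∈ range s,
        (if (-(r:ℤ)+(r+k)) = 0 ∧ (-(s:ℤ)+l) = 0 then 1
         else 1 - q ^ (-(r:ℤ)+(r+k)) * t ^ (-(-(s:ℤ)+l))) := by
  rw [Finset.prod_comm]
  have h1 : ∀ k ∈ range r, (∏ l ∈ range s,
      (if (-(r:ℤ)+(r+k)) = 0 ∧ (-(s:ℤ)+l) = 0 then 1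
       else 1 - q ^ (-(r:ℤ)+(r+k)) * t ^ (-(-(s:ℤ)+l))))
      = (fun x : ℤ => ∏ l ∈ range s, (1 - q ^ x * t ^ ((s:ℤ) - l))) (k:ℤ) := by
    intro k hk
    refine Finset.prod_congr rfl fun l hl => ?_
    simp only [mem_range] at hl
    rw [if_neg (by omega)]
    congr 2 <;> ring
  rw [Finset.prod_congr rfl h1,
      ← prod_reflect (fun x : ℤ => ∏ l ∈ range s, (1 - q ^ x * t ^ ((s:ℤ) - l))) r]
  refine Finset.prod_congr rfl fun j _ => Finset.prod_congr rfl fun i _ => ?_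
  congr 2
  ring

lemma match_C2 (q t : ℂ) (r s : ℕ) :
    (∏ i ∈ range s, ∏ j ∈ range r, (1 - q ^ (-(r:ℤ) + j) * t ^ (-(s:ℤ) + i + 1)))
    = ∏ k ∈ range r, ∏ l ∈ range s,
        (if (-(r:ℤ)+k) = 0 ∧ (-(s:ℤ)+(s+l)) = 0 then 1
         else 1 - q ^ (-(r:ℤ)+k) * t ^ (-(-(s:ℤ)+(s+l)))) := by
  rw [Finset.prod_comm]
  refine Finset.prod_congr rfl fun k hk => ?_
  simp only [mem_range] at hk
  have h1 : ∀ l ∈ range s,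
      (if (-(r:ℤ)+k) = 0 ∧ (-(s:ℤ)+(s+l)) = 0 then 1
       else 1 - q ^ (-(r:ℤ)+k) * t ^ (-(-(s:ℤ)+(s+l))))
      = (fun x : ℤ => 1 - q ^ (-(r:ℤ)+k) * t ^ (-x)) (l:ℤ) := by
    intro l hl
    rw [if_neg (by omega)]
    congr 2
    ring
  rw [Finset.prod_congr rfl h1, ← prod_reflect (fun x : ℤ => 1 - q ^ (-(r:ℤ)+k) * t ^ (-x)) s]
  refine Finset.prod_congr rfl fun i hi => ?_
  simp only [mem_range] at hi
  congr 2
  ring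

lemma match_B {q t : ℂ} (hq : q ≠ 0) (ht : t ≠ 0) (r s : ℕ) :
    (∏ i ∈ range s, ∏ j ∈ range r,
       (1 - (q ^ (r:ℤ) * t ^ (-(s:ℤ)))⁻¹ * q ^ (j:ℤ) * t ^ (-(s:ℤ) + i + 1)))
    = ∏ k ∈ range r, ∏ l ∈ range s,
        (if (-(r:ℤ)+k) = 0 ∧ (-(s:ℤ)+l) = 0 then 1
         else 1 - q ^ (-(r:ℤ)+k) * t ^ (-(-(s:ℤ)+l))) := by
  rw [Finset.prod_comm]
  refine Finset.prod_congr rfl fun k hk => ?_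
  simp only [mem_range] at hk
  have h1 : ∀ l ∈ range s,
      (if (-(r:ℤ)+k) = 0 ∧ (-(s:ℤ)+l) = 0 then 1
       else 1 - q ^ (-(r:ℤ)+k) * t ^ (-(-(s:ℤ)+l)))
      = (fun x : ℤ => 1 - q ^ (-(r:ℤ)+k) * t ^ ((s:ℤ) - x)) (l:ℤ) := by
    intro l hl
    simp only [mem_range] at hl
    rw [if_neg (by omega)]
    congr 2
    ring
  rw [Finset.prod_congr rfl h1,
      ← prod_reflect (fun x : ℤ => 1 - q ^ (-(r:ℤ)+k) * t ^ ((s:ℤ) - x)) s]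
  refine Finset.prod_congr rfl fun i hi => ?_
  simp only [mem_range] at hi
  rw [zmerge_inv hq ht]
  congr 2 <;> ring

lemma match_A {q t : ℂ} (hq : q ≠ 0) (ht : t ≠ 0) (r s : ℕ) :
    (∏ i ∈ range s, ∏ j ∈ range r,
       (if i = 0 ∧ j = r - 1 then 1
        else 1 - (q ^ (r:ℤ) * t ^ (-(s:ℤ))) * q ^ (-((j:ℤ)+1)) * t ^ ((s:ℤ) - i)))
    = ∏ k ∈ range r, ∏ l ∈ range s,
        (if (-(r:ℤ)+(r+k)) = 0 ∧ (-(s:ℤ)+(s+l)) = 0 then 1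
         else 1 - q ^ (-(r:ℤ)+(r+k)) * t ^ (-(-(s:ℤ)+(s+l)))) := by
  rw [Finset.prod_comm]
  have h1 : ∀ k ∈ range r, (∏ l ∈ range s,
      (if (-(r:ℤ)+(r+k)) = 0 ∧ (-(s:ℤ)+(s+l)) = 0 then 1
       else 1 - q ^ (-(r:ℤ)+(r+k)) * t ^ (-(-(s:ℤ)+(s+l)))))
      = (fun x : ℤ => ∏ l ∈ range s,
          (if x = 0 ∧ (l:ℤ) = 0 then 1 else 1 - q ^ x * t ^ (-(l:ℤ)))) (k:ℤ) := by
    intro k hk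
    refine Finset.prod_congr rfl fun l hl => ?_
    refine if_congr (by omega) rfl ?_
    congr 2 <;> ring
  rw [Finset.prod_congr rfl h1,
      ← prod_reflect (fun x : ℤ => ∏ l ∈ range s,
          (if x = 0 ∧ (l:ℤ) = 0 then 1 else 1 - q ^ x * t ^ (-(l:ℤ)))) r]
  refine Finset.prod_congr rfl fun j hj => ?_
  simp only [mem_range] at hj
  refine Finset.prod_congr rfl fun i hi => ?_
  refine if_congr (by omega) rfl ?_
  rw [zmerge hq ht]
  congr 2 <;> ring

/-- The key product identity. -/
lemma key_identity {q t : ℂ} (hq : q ≠ 0) (ht : t ≠ 0) (r s : ℕ) :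
    (∏ i ∈ range s, ∏ j ∈ range r, (1 - q ^ ((r:ℤ) - ((j:ℤ)+1)) * t ^ ((s:ℤ) - i))) *
    (∏ i ∈ range s, ∏ j ∈ range r, (1 - q ^ (-(r:ℤ) + j) * t ^ (-(s:ℤ) + i + 1))) *
    (∏ i ∈ range s, ∏ j ∈ range r,
       (if i = 0 ∧ j = r - 1 then 1
        else 1 - (q ^ (r:ℤ) * t ^ (-(s:ℤ))) * q ^ (-((j:ℤ)+1)) * t ^ ((s:ℤ) - i))) *
    (∏ i ∈ range s, ∏ j ∈ range r,
       (1 - (q ^ (r:ℤ) * t ^ (-(s:ℤ)))⁻¹ * q ^ (j:ℤ) * t ^ (-(s:ℤ) + i + 1))) =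
    ∏ i ∈ Icc (-(r:ℤ)) ((r:ℤ) - 1), ∏ j ∈ Icc (-(s:ℤ)) ((s:ℤ) - 1),
      (if i = 0 ∧ j = 0 then 1 else (1 - q ^ i * t ^ (-j))) := by
  rw [quad_decomp (fun i j => if i = 0 ∧ j = 0 then 1 else (1 - q ^ i * t ^ (-j))) r s]
  rw [match_C1 q t r s, match_C2 q t r s, match_A hq ht r s, match_B hq ht r s]
  ring

end Aux

/-- The residue of `Z_{∅,(r^s)}(Q,q,t)` at the simple pole `Q = q^r t^{-s}`,
computed as `lim_{Q→Q₀}(Q-Q₀)·Z_{∅,(r^s)}(Q)`, equals `G(r,s;q,t)`. -/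
theorem stmt_6 (q t : ℂ) (hq : q ≠ 0) (ht : t ≠ 0)
    (hgen : ∀ a b : ℤ, q ^ a * t ^ b = 1 → a = 0 ∧ b = 0)
    (r s : ℕ) (hr : 1 ≤ r) (hs : 1 ≤ s) :
    Filter.Tendsto
      (fun Q : ℂ => (Q - q ^ (r : ℤ) * t ^ (-(s : ℤ))) * Zlm q t Q emptyP (rect r s))
      (nhdsWithin (q ^ (r : ℤ) * t ^ (-(s : ℤ))) {q ^ (r : ℤ) * t ^ (-(s : ℤ))}ᶜ)
      (nhds (Gfun q t (r : ℤ) (s : ℤ))) := by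
  set Q0 : ℂ := q ^ (r : ℤ) * t ^ (-(s : ℤ)) with hQ0def
  have hQ0 : Q0 ≠ 0 := mul_ne_zero (zpow_ne_zero _ hq) (zpow_ne_zero _ ht)
  -- constants
  set C1 : ℂ := ∏ i ∈ range s, ∏ j ∈ range r, (1 - q ^ ((r:ℤ) - ((j:ℤ)+1)) * t ^ ((s:ℤ) - i)) with hC1
  set C2 : ℂ := ∏ i ∈ range s, ∏ j ∈ range r, (1 - q ^ (-(r:ℤ) + j) * t ^ (-(s:ℤ) + i + 1)) with hC2
  set A' : ℂ → ℂ := fun Q => ∏ i ∈ range s, ∏ j ∈ range r,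
      (if i = 0 ∧ j = r - 1 then 1 else 1 - Q * q ^ (-((j:ℤ)+1)) * t ^ ((s:ℤ) - i)) with hA'
  set B : ℂ → ℂ := fun Q => ∏ i ∈ range s, ∏ j ∈ range r,
      (1 - Q⁻¹ * q ^ (j:ℤ) * t ^ (-(s:ℤ) + i + 1)) with hB
  -- factorization of N_{∅,μ}(Q)
  have hfac : ∀ Q : ℂ, (1:ℂ) - Q * q ^ (-(((r - 1 : ℕ) : ℤ) + 1)) * t ^ ((s:ℤ) - ((0:ℕ):ℤ))
      = 1 - Q * q ^ (-(r:ℤ)) * t ^ (s:ℤ) := by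
    intro Q
    rw [show -(((r - 1 : ℕ) : ℤ) + 1) = -(r:ℤ) by omega,
        show ((s:ℤ) - ((0:ℕ):ℤ)) = (s:ℤ) by simp]
  have hsplit : ∀ Q : ℂ, Nfac q t Q emptyP (rect r s)
      = (1 - Q * q ^ (-(r:ℤ)) * t ^ (s:ℤ)) * A' Q := by
    intro Q
    rw [Nfac_empty_rect q t Q r s,
        prod_split_two (fun i j => 1 - Q * q ^ (-((j:ℤ)+1)) * t ^ ((s:ℤ) - i))
          (by omega : 0 < s) (by omega : r - 1 < r)]
    rw [hfac Q]
  -- the constant Nfac values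
  have hNmm : Nfac q t 1 (rect r s) (rect r s) = C1 * C2 := by
    rw [Nfac_rect_rect q t 1 r s]
    simp only [one_mul, hC1, hC2]
  have hNme : ∀ Q : ℂ, Nfac q t Q⁻¹ (rect r s) emptyP = B Q := fun Q =>
    Nfac_rect_empty q t Q⁻¹ r s
  -- nonvanishing of the limiting denominator
  have hP : C1 * C2 * A' Q0 * B Q0
      = ∏ i ∈ Icc (-(r:ℤ)) ((r:ℤ) - 1), ∏ j ∈ Icc (-(s:ℤ)) ((s:ℤ) - 1),
          (if i = 0 ∧ j = 0 then 1 else (1 - q ^ i * t ^ (-j))) := by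
    rw [hC1, hC2, hA', hB, hQ0def]
    exact key_identity hq ht r s
  have hPne : (∏ i ∈ Icc (-(r:ℤ)) ((r:ℤ) - 1), ∏ j ∈ Icc (-(s:ℤ)) ((s:ℤ) - 1),
      (if i = 0 ∧ j = 0 then 1 else (1 - q ^ i * t ^ (-j)))) ≠ 0 := by
    rw [Finset.prod_ne_zero_iff]
    intro i hi
    rw [Finset.prod_ne_zero_iff]
    intro j hj
    split_ifs with h
    · exact one_ne_zero
    · intro hzero
      have : q ^ i * t ^ (-j) = 1 := by linear_combination -hzero
      obtain ⟨h1, h2⟩ := hgen i (-j) this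
      exact h ⟨h1, by omega⟩
  have hDne : C1 * C2 * A' Q0 * B Q0 ≠ 0 := hP ▸ hPne
  -- continuity
  have hA'T : Tendsto (fun Q => A' Q) (nhds Q0) (nhds (A' Q0)) := by
    simp only [hA']
    refine tendsto_finset_prod _ fun i _ => tendsto_finset_prod _ fun j _ => ?_
    split_ifs
    · exact tendsto_const_nhds
    · exact tendsto_const_nhds.sub ((tendsto_id.mul tendsto_const_nhds).mul tendsto_const_nhds)
  have hBT : Tendsto (fun Q => B Q) (nhds Q0) (nhds (B Q0)) := by
    simp only [hB]
    refine tendsto_finset_prod _ fun i _ => tendsto_finset_prod _ fun j _ => ?_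
    exact tendsto_const_nhds.sub
      (((tendsto_id.inv₀ hQ0).mul tendsto_const_nhds).mul tendsto_const_nhds)
  have hTend : Tendsto (fun Q : ℂ => -Q0 / (C1 * C2 * A' Q * B Q))
      (nhds Q0) (nhds (-Q0 / (C1 * C2 * A' Q0 * B Q0))) :=
    Filter.Tendsto.div tendsto_const_nhds
      (Filter.Tendsto.mul (Filter.Tendsto.mul tendsto_const_nhds hA'T) hBT) hDne
  -- auxiliary constants
  have ha1 : q ^ (-(r:ℤ)) * t ^ (s:ℤ) * Q0 = 1 := by
    rw [hQ0def, show q ^ (-(r:ℤ)) * t ^ (s:ℤ) * (q ^ (r:ℤ) * t ^ (-(s:ℤ)))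
          = (q ^ (-(r:ℤ)) * q ^ (r:ℤ)) * (t ^ (s:ℤ) * t ^ (-(s:ℤ))) by ring,
        ← zpow_add₀ hq, ← zpow_add₀ ht]
    simp
  have ha2 : (-(q ^ (-(r:ℤ)) * t ^ (s:ℤ)))⁻¹ = -Q0 := by
    rw [inv_neg, mul_inv, zpow_neg, inv_inv, ← zpow_neg, hQ0def]
  -- equality away from the pole
  have hEq : ∀ Q ∈ ({Q0}ᶜ : Set ℂ),
      -Q0 / (C1 * C2 * A' Q * B Q) = (Q - Q0) * Zlm q t Q emptyP (rect r s) := by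
    intro Q hQ
    have hQne : Q - Q0 ≠ 0 := sub_ne_zero.mpr hQ
    rw [Zlm, Nfac_empty_empty, hNmm, hsplit Q, hNme Q, one_mul]
    have hc : (1 : ℂ) - Q * q ^ (-(r:ℤ)) * t ^ (s:ℤ)
        = -(q ^ (-(r:ℤ)) * t ^ (s:ℤ)) * (Q - Q0) := by
      linear_combination -ha1
    have hcne : -(q ^ (-(r:ℤ)) * t ^ (s:ℤ)) ≠ 0 :=
      neg_ne_zero.mpr (mul_ne_zero (zpow_ne_zero _ hq) (zpow_ne_zero _ ht))
    have cancel : ∀ u c X : ℂ, u ≠ 0 → c ≠ 0 → u * (1 / (u * (c * X))) = c⁻¹ / X := by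
      intro u c X hu hc'
      rcases eq_or_ne X 0 with rfl | hX
      · simp
      · field_simp
    rw [hc, show C1 * C2 * (-(q ^ (-(r:ℤ)) * t ^ (s:ℤ)) * (Q - Q0) * A' Q) * B Q
          = (Q - Q0) * (-(q ^ (-(r:ℤ)) * t ^ (s:ℤ)) * (C1 * C2 * A' Q * B Q)) by ring,
        cancel (Q - Q0) _ _ hQne hcne, ha2]
  -- identification of the limit value
  have hG : Gfun q t (r:ℤ) (s:ℤ) = -Q0 / (C1 * C2 * A' Q0 * B Q0) := by
    rw [Gfun, hP]
    rw [if_pos (by exact_mod_cast hr : (0:ℤ) < (r:ℤ))]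
    rw [show |((r:ℕ):ℤ)| = (r:ℤ) from abs_of_nonneg (Int.natCast_nonneg r),
        show |((s:ℕ):ℤ)| = (s:ℤ) from abs_of_nonneg (Int.natCast_nonneg s)]
    have hinv : (∏ i ∈ Icc (-(r:ℤ)) ((r:ℤ) - 1), ∏ j ∈ Icc (-(s:ℤ)) ((s:ℤ) - 1),
        (if i = 0 ∧ j = 0 then 1 else (1 - q ^ i * t ^ (-j))⁻¹))
        = (∏ i ∈ Icc (-(r:ℤ)) ((r:ℤ) - 1), ∏ j ∈ Icc (-(s:ℤ)) ((s:ℤ) - 1),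
            (if i = 0 ∧ j = 0 then 1 else (1 - q ^ i * t ^ (-j))))⁻¹ := by
      rw [← Finset.prod_inv_distrib]
      refine Finset.prod_congr rfl fun i _ => ?_
      rw [← Finset.prod_inv_distrib]
      refine Finset.prod_congr rfl fun j _ => ?_
      rw [apply_ite Inv.inv, inv_one]
    rw [hinv, hQ0def, div_eq_mul_inv]
    ring
  rw [hG]
  exact Filter.Tendsto.congr'
    (eventually_nhdsWithin_of_forall hEq)
    (hTend.mono_left nhdsWithin_le_nhds)
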